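/- Let G be a discrete group and I₀ a codimension-1 closed two-sided ideal of ℓ¹(G). Then ℓ¹(G) is I₀-weakly amenable, i.e., every continuous derivation D : ℓ¹(G) → I₀* is inner. -/

import Mathlib

set_option linter.unusedSectionVars false
set_option linter.unnecessarySimpa false
set_option linter.unusedTactic false
set_option maxHeartbeats 1000000

open NormedSpace

noncomputable section

variable {A : Type*} [NonUnitalNormedRing A] [NormedSpace ℂ A]
  [IsScalarTower ℂ A A] [SMulCommClass ℂ A A]

/-- A closed two-sided ideal of a Banach algebra, given as a closed submodule
stable under left and right multiplication. -/
structure IsClosedTwoSidedIdeal (I : Submodule ℂ A) : Prop where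
  isClosed : IsClosed (I : Set A)
  mul_left : ∀ (a : A) ⦃x : A⦄, x ∈ I → a * x ∈ I
  mul_right : ∀ (a : A) ⦃x : A⦄, x ∈ I → x * a ∈ I

/-- `D : A → I*` is a derivation for the canonical dual bimodule structure:
`⟨a·f, i⟩ = ⟨f, i a⟩` and `⟨f·a, i⟩ = ⟨f, a i⟩`, so that
`D(ab) = a·D(b) + D(a)·b` reads pointwise as below. -/
def IsIdealDerivation (I : Submodule ℂ A) (hI : IsClosedTwoSidedIdeal I)
    (D : A →L[ℂ] StrongDual ℂ I) : Prop :=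
  ∀ a b : A, ∀ i : I, D (a * b) i =
    D b ⟨(i : A) * a, hI.mul_right a i.2⟩ + D a ⟨b * (i : A), hI.mul_left b i.2⟩

/-- `D : A → I*` is inner: `D = δ_ξ`, i.e. `D a = a·ξ - ξ·a`. -/
def IsInnerIdealDerivation (I : Submodule ℂ A) (hI : IsClosedTwoSidedIdeal I)
    (D : A →L[ℂ] StrongDual ℂ I) : Prop :=
  ∃ ξ : StrongDual ℂ I, ∀ (a : A) (i : I),
    D a i = ξ ⟨(i : A) * a, hI.mul_right a i.2⟩ - ξ ⟨a * (i : A), hI.mul_left a i.2⟩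

/-- `A` is ideally amenable: for every closed two-sided ideal `I`,
every continuous derivation `A → I*` is inner. -/
def IdeallyAmenable (A : Type*) [NonUnitalNormedRing A] [NormedSpace ℂ A]
    [IsScalarTower ℂ A A] [SMulCommClass ℂ A A] : Prop :=
  ∀ (I : Submodule ℂ A) (hI : IsClosedTwoSidedIdeal I) (D : A →L[ℂ] StrongDual ℂ I),
    IsIdealDerivation I hI D → IsInnerIdealDerivation I hI D

namespace L1WAaux

open scoped ENNReal

section Group

variable {G : Type*} [Group G]

/-- Vanishing of bounded additive maps on centralizers. -/
lemma centralizer_vanish (F : G → G → ℂ) (K : ℝ)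
    (hF : ∀ g h x : G, F (g * h) x = F h x + F g (h * x * h⁻¹))
    (hFb : ∀ g x : G, ‖F g x‖ ≤ K)
    (c s : G) (hs : s * c * s⁻¹ = c) : F s c = 0 := by
  have hpow : ∀ n : ℕ,
      s ^ (n + 1) * c * (s ^ (n + 1))⁻¹ = c ∧ F (s ^ (n + 1)) c = (n + 1) • F s c := by
    intro n
    induction n with
    | zero => simpa using hs
    | succ m ih =>
      constructor
      · have : s ^ (m + 2) * c * (s ^ (m + 2))⁻¹
            = s * (s ^ (m + 1) * c * (s ^ (m + 1))⁻¹) * s⁻¹ := by group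
        rw [this, ih.1, hs]
      · have h1 : F (s * s ^ (m + 1)) c
            = F (s ^ (m + 1)) c + F s (s ^ (m + 1) * c * (s ^ (m + 1))⁻¹) :=
          hF s (s ^ (m + 1)) c
        have h2 : s * s ^ (m + 1) = s ^ (m + 2) := by group
        rw [h2, ih.1] at h1
        rw [h1, ih.2]
        simp [succ_nsmul]
        push_cast
        ring
  by_contra h0
  have hpos : 0 < ‖F s c‖ := norm_pos_iff.mpr h0
  obtain ⟨n, hn⟩ := exists_nat_gt (K / ‖F s c‖)
  have hb := hFb (s ^ (n + 1)) c
  rw [(hpow n).2] at hb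
  have hthis : ((n : ℝ) + 1) * ‖F s c‖ ≤ K := by
    calc ((n : ℝ) + 1) * ‖F s c‖ = ‖(n + 1) • F s c‖ := by
          rw [nsmul_eq_mul, norm_mul, Complex.norm_natCast]
          push_cast
          ring
    _ ≤ K := hb
  have h2 : K < (n : ℝ) * ‖F s c‖ := (div_lt_iff₀ hpos).mp hn
  nlinarith

/-- Solving the conjugation cocycle equation, conjugacy class by conjugacy class. -/
lemma solve_cocycle (F : G → G → ℂ) (K : ℝ)
    (hF : ∀ g h x : G, F (g * h) x = F h x + F g (h * x * h⁻¹))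
    (hFb : ∀ g x : G, ‖F g x‖ ≤ K) :
    ∃ Θ : G → ℂ, (∀ x, ‖Θ x‖ ≤ K) ∧ ∀ g x : G, F g x = Θ x - Θ (g * x * g⁻¹) := by
  classical
  have hr : ∀ x : G, IsConj ((ConjClasses.mk x).out) x := by
    intro x
    rw [← ConjClasses.mk_eq_mk_iff_isConj]
    exact Quotient.out_eq _
  set r : G → G := fun x => (ConjClasses.mk x).out with hr_def
  have hconjr : ∀ x : G, ∃ t : G, t * r x * t⁻¹ = x := by
    intro x
    obtain ⟨u, hu⟩ := (hr x)
    refine ⟨(u : G), ?_⟩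
    rw [SemiconjBy.eq hu]
    group
  set t : G → G := fun x => (hconjr x).choose with ht_def
  have ht : ∀ x : G, t x * r x * (t x)⁻¹ = x := fun x => (hconjr x).choose_spec
  have hrconj : ∀ (g x : G), r (g * x * g⁻¹) = r x := by
    intro g x
    have : ConjClasses.mk (g * x * g⁻¹) = ConjClasses.mk x := by
      rw [ConjClasses.mk_eq_mk_iff_isConj, isConj_iff]
      exact ⟨g⁻¹, by group⟩
    simp only [hr_def, this]
  refine ⟨fun z => -F (t z) (r z), fun x => by simpa using hFb (t x) (r x), ?_⟩
  intro g x
  set z := g * x * g⁻¹ with hz_def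
  set c := r x with hc_def
  have hcz : r z = c := hrconj g x
  have hx : t x * c * (t x)⁻¹ = x := ht x
  have hzz : t z * c * (t z)⁻¹ = z := by rw [← hcz]; exact ht z
  set s := (t z)⁻¹ * (g * t x) with hs_def
  have hs : s * c * s⁻¹ = c := by
    have h1 : s * c * s⁻¹ = (t z)⁻¹ * (g * (t x * c * (t x)⁻¹) * g⁻¹) * t z := by
      rw [hs_def]; group
    have key : ∀ w zz : G, w * c * w⁻¹ = zz → w⁻¹ * zz * w = c := by
      intro w zz h; rw [← h]; group
    rw [h1, hx, ← hz_def]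
    exact key (t z) z hzz
  have e1 : F (g * t x) c = F (t x) c + F g x := by rw [hF g (t x) c, hx]
  have e2 : F (g * t x) c = F (t z) c := by
    have hgt : g * t x = t z * s := by rw [hs_def]; group
    rw [hgt, hF (t z) s c, hs, centralizer_vanish F K hF hFb c s hs, zero_add]
  show F g x = -F (t x) (r x) - -F (t z) (r z)
  rw [hcz, ← hc_def]
  linear_combination e2 - e1

end Group

section Main

variable [CompleteSpace A] {G : Type*} [Group G] [DecidableEq G]

/-- The canonical "group element" unit vectors in `A ≅ ℓ¹(G)`. -/
def uu (e : A ≃ₗᵢ[ℂ] lp (fun _ : G => ℂ) 1) (g : G) : A :=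
  e.symm (lp.single 1 g 1)

variable (e : A ≃ₗᵢ[ℂ] lp (fun _ : G => ℂ) 1)

lemma e_uu (g : G) : e (uu e g) = lp.single 1 g 1 := e.apply_symm_apply _

lemma uu_apply (g x : G) : (e (uu e g) : ∀ _ : G, ℂ) x = if x = g then 1 else 0 := by
  rw [e_uu]
  by_cases h : x = g
  · subst h; simp [lp.single_apply_self]
  · simp [lp.single_apply_ne _ _ _ h, h]

lemma norm_uu (g : G) : ‖uu e g‖ = 1 := by
  have h1 : (0:ℝ) < (1 : ℝ≥0∞).toReal := by norm_num
  have h2 := lp.norm_single (p := 1) (E := fun _ : G => ℂ) (by norm_num) g (1:ℂ)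
  simp only [norm_one] at h2
  simpa [uu, h2] using e.symm.norm_map (lp.single 1 g (1:ℂ))

lemma dense_span_uu : Dense (Submodule.span ℂ (Set.range (uu e)) : Set A) := by
  rw [dense_iff_closure_eq, Set.eq_univ_iff_forall]
  intro a
  have hs : HasSum (fun g : G => lp.single 1 g ((e a : ∀ _ : G, ℂ) g)) (e a) :=
    lp.hasSum_single (by simp) (e a)
  have hs2 : HasSum (fun g : G => e.symm (lp.single 1 g ((e a : ∀ _ : G, ℂ) g))) a := by
    have := hs.map (e.symm.toLinearIsometry.toLinearMap.toAddMonoidHom) e.symm.continuous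
    simpa [Function.comp_def] using this
  refine mem_closure_of_tendsto hs2 (Filter.Eventually.of_forall fun s => ?_)
  refine Submodule.sum_mem _ fun g _ => ?_
  have : lp.single 1 g ((e a : ∀ _ : G, ℂ) g)
      = ((e a : ∀ _ : G, ℂ) g) • (lp.single 1 g (1:ℂ) : lp (fun _ : G => ℂ) 1) := by
    rw [← lp.single_smul]; norm_num
  rw [this, map_smul]
  exact Submodule.smul_mem _ _ (Submodule.subset_span ⟨g, rfl⟩)

lemma clm_ext_uu (T S : A →L[ℂ] ℂ) (h : ∀ g : G, T (uu e g) = S (uu e g)) : T = S :=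
  ContinuousLinearMap.ext_on (dense_span_uu e) (by rintro x ⟨g, rfl⟩; exact h g)

lemma summable_mul (Θ : G → ℂ) (C : ℝ) (hΘ : ∀ x, ‖Θ x‖ ≤ C) (a : A) :
    Summable fun x : G => (e a : ∀ _ : G, ℂ) x * Θ x := by
  have h1 : Summable fun x : G => ‖(e a : ∀ _ : G, ℂ) x‖ := by
    have := (lp.memℓp (e a)).summable (p := 1) (by simp)
    simpa using this
  refine Summable.of_norm_bounded (h1.mul_right C) fun x => ?_
  rw [norm_mul]
  exact mul_le_mul_of_nonneg_left (hΘ x) (norm_nonneg _)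

lemma norm_eq_tsum (a : A) : ∑' x : G, ‖(e a : ∀ _ : G, ℂ) x‖ = ‖a‖ := by
  have h := lp.hasSum_norm (p := 1) (by simp) (e a)
  simp only [ENNReal.toReal_one, Real.rpow_one] at h
  rw [h.tsum_eq, ← e.norm_map a]

/-- The pairing of `A ≅ ℓ¹(G)` against a bounded function `Θ : G → ℂ`. -/
def lpair (Θ : G → ℂ) (C : ℝ) (hΘ : ∀ x, ‖Θ x‖ ≤ C) : A →L[ℂ] ℂ :=
  LinearMap.mkContinuous
    { toFun := fun a => ∑' x : G, (e a : ∀ _ : G, ℂ) x * Θ x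
      map_add' := by
        intro a b
        rw [← Summable.tsum_add (summable_mul e Θ C hΘ a) (summable_mul e Θ C hΘ b)]
        apply tsum_congr
        intro x
        have : (e (a + b) : ∀ _ : G, ℂ) x
            = (e a : ∀ _ : G, ℂ) x + (e b : ∀ _ : G, ℂ) x := by
          rw [map_add]; rfl
        rw [this, add_mul]
      map_smul' := by
        intro c a
        rw [RingHom.id_apply, ← tsum_const_smul'' c]
        apply tsum_congr
        intro x
        have : (e (c • a) : ∀ _ : G, ℂ) x = c * (e a : ∀ _ : G, ℂ) x := by
          rw [map_smul]; rfl
        rw [this, smul_eq_mul]; ring }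
    C
    (by
      intro a
      have h1 : Summable fun x : G => ‖(e a : ∀ _ : G, ℂ) x‖ := by
        have := (lp.memℓp (e a)).summable (p := 1) (by simp)
        simpa using this
      have hle : ∀ x : G, ‖(e a : ∀ _ : G, ℂ) x * Θ x‖ ≤ ‖(e a : ∀ _ : G, ℂ) x‖ * C := by
        intro x
        rw [norm_mul]
        exact mul_le_mul_of_nonneg_left (hΘ x) (norm_nonneg _)
      have hsn : Summable fun x : G => ‖(e a : ∀ _ : G, ℂ) x * Θ x‖ :=
        Summable.of_nonneg_of_le (fun x => norm_nonneg _) hle (h1.mul_right C)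
      calc ‖∑' x : G, (e a : ∀ _ : G, ℂ) x * Θ x‖
          ≤ ∑' x : G, ‖(e a : ∀ _ : G, ℂ) x * Θ x‖ := norm_tsum_le_tsum_norm hsn
        _ ≤ ∑' x : G, ‖(e a : ∀ _ : G, ℂ) x‖ * C := Summable.tsum_le_tsum hle hsn (h1.mul_right C)
        _ = C * ‖a‖ := by rw [tsum_mul_right, norm_eq_tsum e a, mul_comm])

lemma lpair_uu (Θ : G → ℂ) (C : ℝ) (hΘ : ∀ x, ‖Θ x‖ ≤ C) (g : G) :
    lpair e Θ C hΘ (uu e g) = Θ g := by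
  have h0 : ∀ x : G, x ≠ g → (e (uu e g) : ∀ _ : G, ℂ) x * Θ x = 0 := by
    intro x hx; rw [uu_apply, if_neg hx, zero_mul]
  calc lpair e Θ C hΘ (uu e g) = ∑' x : G, (e (uu e g) : ∀ _ : G, ℂ) x * Θ x := rfl
    _ = (e (uu e g) : ∀ _ : G, ℂ) g * Θ g := tsum_eq_single g h0
    _ = Θ g := by rw [uu_apply, if_pos rfl, one_mul]

variable (hconv : ∀ f g : A, ∀ x : G,
      (e (f * g) : ∀ _ : G, ℂ) x = ∑' y : G, (e f : ∀ _ : G, ℂ) y * (e g : ∀ _ : G, ℂ) (y⁻¹ * x))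

include hconv

lemma uu_mul (g h : G) : uu e g * uu e h = uu e (g * h) := by
  apply e.injective
  apply lp.ext
  funext x
  have : ∀ y : G, y ≠ g →
      (e (uu e g) : ∀ _ : G, ℂ) y * (e (uu e h) : ∀ _ : G, ℂ) (y⁻¹ * x) = 0 := by
    intro y hy
    rw [uu_apply, if_neg hy, zero_mul]
  calc (e (uu e g * uu e h) : ∀ _ : G, ℂ) x
      = ∑' y : G, (e (uu e g) : ∀ _ : G, ℂ) y * (e (uu e h) : ∀ _ : G, ℂ) (y⁻¹ * x) :=
        hconv _ _ x
    _ = (e (uu e g) : ∀ _ : G, ℂ) g * (e (uu e h) : ∀ _ : G, ℂ) (g⁻¹ * x) :=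
        tsum_eq_single g this
    _ = (e (uu e (g * h)) : ∀ _ : G, ℂ) x := by
        rw [uu_apply, uu_apply, uu_apply, if_pos rfl, one_mul]
        congr 1
        simp [eq_comm, inv_mul_eq_iff_eq_mul, mul_comm]
        constructor
        · intro hh; rw [hh]; group
        · intro hh; rw [hh]; group

lemma uu_one_mul (a : A) : uu e 1 * a = a := by
  apply e.injective; apply lp.ext; funext x
  have : ∀ y : G, y ≠ 1 →
      (e (uu e 1) : ∀ _ : G, ℂ) y * (e a : ∀ _ : G, ℂ) (y⁻¹ * x) = 0 := by
    intro y hy; rw [uu_apply, if_neg hy, zero_mul]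
  calc (e (uu e 1 * a) : ∀ _ : G, ℂ) x
      = ∑' y : G, (e (uu e 1) : ∀ _ : G, ℂ) y * (e a : ∀ _ : G, ℂ) (y⁻¹ * x) := hconv _ _ x
    _ = (e (uu e 1) : ∀ _ : G, ℂ) 1 * (e a : ∀ _ : G, ℂ) (1⁻¹ * x) := tsum_eq_single 1 this
    _ = (e a : ∀ _ : G, ℂ) x := by rw [uu_apply, if_pos rfl, one_mul]; simp

lemma mul_uu_one (a : A) : a * uu e 1 = a := by
  apply e.injective; apply lp.ext; funext x
  have : ∀ y : G, y ≠ x →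
      (e a : ∀ _ : G, ℂ) y * (e (uu e 1) : ∀ _ : G, ℂ) (y⁻¹ * x) = 0 := by
    intro y hy
    have hne : y⁻¹ * x ≠ 1 := fun hc => hy (inv_mul_eq_one.mp hc)
    rw [uu_apply, if_neg hne, mul_zero]
  calc (e (a * uu e 1) : ∀ _ : G, ℂ) x
      = ∑' y : G, (e a : ∀ _ : G, ℂ) y * (e (uu e 1) : ∀ _ : G, ℂ) (y⁻¹ * x) := hconv _ _ x
    _ = (e a : ∀ _ : G, ℂ) x * (e (uu e 1) : ∀ _ : G, ℂ) (x⁻¹ * x) := tsum_eq_single x this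
    _ = (e a : ∀ _ : G, ℂ) x := by rw [uu_apply, if_pos (by group), mul_one]

omit hconv

lemma exists_phi (ue : A) (hue_r' : ∀ a : A, a * ue = a)
    (I₀ : Submodule ℂ A) (hI₀ : IsClosedTwoSidedIdeal I₀)
    (hcodim : ∃ a₀ : A, a₀ ∉ I₀ ∧ ∀ x : A, ∃ c : ℂ, x - c • a₀ ∈ I₀) :
    ∃ φ : A →L[ℂ] ℂ, (∀ x : A, x ∈ I₀ ↔ φ x = 0) ∧ φ ue = 1 ∧
      ∀ x y : A, φ (x * y) = φ x * φ y := by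
  obtain ⟨a₀, ha₀, hc⟩ := hcodim
  have hue : ue ∉ I₀ := by
    intro h
    exact ha₀ (by simpa [hue_r' a₀] using hI₀.mul_left a₀ h)
  have huniq : ∀ x : A, ∃! c : ℂ, x - c • ue ∈ I₀ := by
    intro x
    obtain ⟨c, hcx⟩ := hc x
    obtain ⟨c₀, hc₀⟩ := hc ue
    have hc₀0 : c₀ ≠ 0 := by
      intro h; rw [h] at hc₀; simp at hc₀; exact hue hc₀
    have hmem : x - (c / c₀) • ue ∈ I₀ := by
      have hq : x - (c / c₀) • ue = (x - c • a₀) - (c / c₀) • (ue - c₀ • a₀) := by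
        rw [smul_sub, smul_smul, div_mul_cancel₀ _ hc₀0]
        abel
      rw [hq]
      exact Submodule.sub_mem _ hcx (Submodule.smul_mem _ _ hc₀)
    refine ⟨c / c₀, hmem, ?_⟩
    · intro c' hc'
      by_contra hne
      have h1 : (c / c₀ - c') • ue ∈ I₀ := by
        have h2 := Submodule.sub_mem _ (show x - c' • ue ∈ I₀ from hc') hmem
        have heq : x - c' • ue - (x - (c / c₀) • ue) = (c / c₀ - c') • ue := by
          rw [sub_smul]; abel
        rwa [heq] at h2
      have hne' : c / c₀ - c' ≠ 0 := fun h => hne (by linear_combination -h)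
      have := Submodule.smul_mem I₀ (c / c₀ - c')⁻¹ h1
      rw [smul_smul, inv_mul_cancel₀ hne', one_smul] at this
      exact hue this
  classical
  set φ₀ : A → ℂ := fun x => (huniq x).choose with hφ₀
  have spec : ∀ x : A, x - φ₀ x • ue ∈ I₀ := fun x => (huniq x).choose_spec.1
  have uniq : ∀ (x : A) (c : ℂ), x - c • ue ∈ I₀ → c = φ₀ x := fun x c h =>
    (huniq x).choose_spec.2 c h
  have hadd : ∀ x y : A, φ₀ (x + y) = φ₀ x + φ₀ y := by
    intro x y
    refine (uniq _ _ ?_).symm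
    have : x + y - (φ₀ x + φ₀ y) • ue = (x - φ₀ x • ue) + (y - φ₀ y • ue) := by
      rw [add_smul]; abel
    rw [this]; exact Submodule.add_mem _ (spec x) (spec y)
  have hsmul : ∀ (c : ℂ) (x : A), φ₀ (c • x) = c * φ₀ x := by
    intro c x
    refine (uniq _ _ ?_).symm
    have : c • x - (c * φ₀ x) • ue = c • (x - φ₀ x • ue) := by
      rw [smul_sub, smul_smul]
    rw [this]; exact Submodule.smul_mem _ _ (spec x)
  set φₗ : A →ₗ[ℂ] ℂ :=
    { toFun := φ₀, map_add' := hadd, map_smul' := hsmul } with hφₗ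
  have hker : ∀ x : A, x ∈ I₀ ↔ φ₀ x = 0 := by
    intro x
    constructor
    · intro h
      exact (uniq x 0 (by simpa using h)).symm
    · intro h
      have := spec x; rw [h, zero_smul, sub_zero] at this; exact this
  have hkerl : LinearMap.ker φₗ = I₀ := by
    ext x
    simp only [LinearMap.mem_ker, hφₗ, LinearMap.coe_mk, AddHom.coe_mk]
    exact (hker x).symm
  have hcont : Continuous φₗ :=
    φₗ.continuous_of_isClosed_ker (by rw [hkerl]; exact hI₀.isClosed)
  refine ⟨⟨φₗ, hcont⟩, ?_, ?_, ?_⟩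
  · intro x; exact hker x
  · exact (uniq ue 1 (by simp)).symm
  · intro x y
    show φ₀ (x * y) = φ₀ x * φ₀ y
    refine (uniq _ _ ?_).symm
    have hrw : x * y - (φ₀ x * φ₀ y) • ue
        = x * (y - φ₀ y • ue) + φ₀ y • (x - φ₀ x • ue) := by
      rw [mul_sub, smul_sub, mul_smul_comm, hue_r' x, smul_smul, mul_comm (φ₀ y) (φ₀ x)]
      abel
    rw [hrw]
    exact Submodule.add_mem _ (hI₀.mul_left x (spec y)) (Submodule.smul_mem _ _ (spec x))

end Main

end L1WAaux

instance l1WANormedSpaceSubmodule (I : Submodule ℂ A) : NormedSpace ℂ I := Submodule.normedSpace I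

/-- Let `G` be a discrete group and let `A = ℓ¹(G)` be its group
algebra (a Banach algebra isometrically isomorphic as a Banach space to
`ℓ¹(G)`, with multiplication given by convolution
`(f * g)(x) = ∑_y f(y) g(y⁻¹ x)`).  If `I₀` is a codimension-1 closed two-sided
ideal of `ℓ¹(G)`, then `ℓ¹(G)` is `I₀`-weakly amenable: every continuous
derivation `D : ℓ¹(G) → I₀*` is inner. -/
theorem l1_group_algebra_I0_weakly_amenable
    [CompleteSpace A] (G : Type*) [Group G]
    (e : A ≃ₗᵢ[ℂ] lp (fun _ : G => ℂ) 1)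
    (hconv : ∀ f g : A, ∀ x : G,
      (e (f * g) : ∀ _ : G, ℂ) x = ∑' y : G, (e f : ∀ _ : G, ℂ) y * (e g : ∀ _ : G, ℂ) (y⁻¹ * x))
    (I₀ : Submodule ℂ A) (hI₀ : IsClosedTwoSidedIdeal I₀)
    (hcodim : ∃ a₀ : A, a₀ ∉ I₀ ∧ ∀ x : A, ∃ c : ℂ, x - c • a₀ ∈ I₀)
    (D : A →L[ℂ] StrongDual ℂ I₀) (hD : IsIdealDerivation I₀ hI₀ D) :
    IsInnerIdealDerivation I₀ hI₀ D := by
  classical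
  letI : DecidableEq G := Classical.decEq G
  open L1WAaux in
  -- basic structure
  set u : G → A := uu e with hu_def
  have hmul : ∀ g h : G, u g * u h = u (g * h) := uu_mul e hconv
  have hnorm : ∀ g : G, ‖u g‖ = 1 := norm_uu e
  have hue_l : ∀ a : A, u 1 * a = a := uu_one_mul e hconv
  have hue_r : ∀ a : A, a * u 1 = a := mul_uu_one e hconv
  obtain ⟨φ, hker, hφ1, hφmul⟩ := exists_phi (u 1) hue_r I₀ hI₀ hcodim
  set χ : G → ℂ := fun g => φ (u g) with hχ_def
  have hχmul : ∀ g h : G, χ (g * h) = χ g * χ h := by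
    intro g h
    show φ (u (g * h)) = φ (u g) * φ (u h)
    rw [← hmul]; exact hφmul _ _
  have hχ1 : χ 1 = 1 := hφ1
  have hχinv : ∀ g : G, χ g * χ g⁻¹ = 1 := by
    intro g
    rw [← hχmul, mul_inv_cancel, hχ1]
  have hχne : ∀ g : G, χ g ≠ 0 := by
    intro g h0
    have := hχinv g
    rw [h0, zero_mul] at this
    exact one_ne_zero this.symm
  have hχb : ∀ g : G, ‖χ g‖ ≤ ‖φ‖ := by
    intro g
    calc ‖φ (u g)‖ ≤ ‖φ‖ * ‖u g‖ := φ.le_opNorm _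
      _ = ‖φ‖ := by rw [hnorm]; ring
  -- the elements v x spanning I₀
  have hvmem : ∀ x : G, u x - χ x • u 1 ∈ I₀ := by
    intro x
    rw [hker]
    rw [map_sub, map_smul, hφ1, smul_eq_mul, mul_one]
    exact sub_self _
  set v : G → ↥I₀ := fun x => ⟨u x - χ x • u 1, hvmem x⟩ with hv_def
  -- the cocycle F
  have hmemF : ∀ (g x : G), ((v x : A)) * u g⁻¹ ∈ I₀ := fun g x => hI₀.mul_right _ (v x).2
  set F : G → G → ℂ := fun g x => D (u g) ⟨(v x : A) * u g⁻¹, hmemF g x⟩ with hF_def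
  -- helper for subtype congruence
  have Dcongr : ∀ (T : StrongDual ℂ I₀) (w1 w2 : A) (h1 : w1 ∈ I₀) (h2 : w2 ∈ I₀),
      w1 = w2 → T ⟨w1, h1⟩ = T ⟨w2, h2⟩ := by
    intro T w1 w2 h1 h2 h
    congr 1
    exact Subtype.ext h
  -- conjugation of v
  have hvconj : ∀ (h x : G), u h * (v x : A) * u h⁻¹ = (v (h * x * h⁻¹) : A) := by
    intro h x
    show u h * (u x - χ x • u 1) * u h⁻¹ = u (h * x * h⁻¹) - χ (h * x * h⁻¹) • u 1
    have hχc : χ (h * x * h⁻¹) = χ x := by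
      rw [hχmul, hχmul]
      have := hχinv h
      ring_nf
      calc χ h * χ x * χ h⁻¹ = χ x * (χ h * χ h⁻¹) := by ring
        _ = χ x := by rw [hχinv, mul_one]
    rw [hχc, mul_sub, sub_mul, hmul, hmul, mul_smul_comm, smul_mul_assoc, hue_r, hmul]
    have h1 : h * h⁻¹ = 1 := by group
    rw [h1]
  -- cocycle identity
  have hFcoc : ∀ g h x : G, F (g * h) x = F h x + F g (h * x * h⁻¹) := by
    intro g h x
    have hD1 := hD (u g) (u h) ⟨(v x : A) * u (g * h)⁻¹, hmemF (g * h) x⟩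
    rw [hmul] at hD1
    have e1 : ((v x : A) * u (g * h)⁻¹) * u g = (v x : A) * u h⁻¹ := by
      rw [mul_assoc, hmul]
      congr 2
      group
    have e2 : u h * ((v x : A) * u (g * h)⁻¹) = (v (h * x * h⁻¹) : A) * u g⁻¹ := by
      have : u (g * h)⁻¹ = u h⁻¹ * u g⁻¹ := by rw [hmul]; congr 1; group
      rw [this, ← mul_assoc, ← mul_assoc, hvconj h x]
    calc F (g * h) x = D (u (g * h)) ⟨(v x : A) * u (g * h)⁻¹, hmemF (g * h) x⟩ := rfl
      _ = D (u h) ⟨((v x : A) * u (g * h)⁻¹) * u g, _⟩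
          + D (u g) ⟨u h * ((v x : A) * u (g * h)⁻¹), _⟩ := hD1
      _ = F h x + F g (h * x * h⁻¹) := by
          rw [Dcongr (D (u h)) _ _ _ (hmemF h x) e1,
            Dcongr (D (u g)) _ _ _ (hmemF g (h * x * h⁻¹)) e2]
  -- bound
  have hvnorm : ∀ x : G, ‖(v x : A)‖ ≤ 1 + ‖φ‖ * ‖u 1‖ := by
    intro x
    calc ‖u x - χ x • u 1‖ ≤ ‖u x‖ + ‖χ x • u 1‖ := norm_sub_le _ _
      _ = 1 + ‖χ x‖ * ‖u 1‖ := by rw [hnorm, norm_smul]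
      _ ≤ 1 + ‖φ‖ * ‖u 1‖ := by
          have := hχb x
          have h0 : (0:ℝ) ≤ ‖u 1‖ := norm_nonneg _
          nlinarith
  set K : ℝ := ‖D‖ * (1 + ‖φ‖ * ‖u 1‖) with hK_def
  have hFb : ∀ g x : G, ‖F g x‖ ≤ K := by
    intro g x
    have h1 : ‖(⟨(v x : A) * u g⁻¹, hmemF g x⟩ : ↥I₀)‖ = ‖(v x : A) * u g⁻¹‖ := rfl
    calc ‖F g x‖ ≤ ‖D (u g)‖ * ‖(⟨(v x : A) * u g⁻¹, hmemF g x⟩ : ↥I₀)‖ :=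
          (D (u g)).le_opNorm _
      _ ≤ (‖D‖ * ‖u g‖) * ‖(v x : A) * u g⁻¹‖ := by
          rw [h1]
          exact mul_le_mul_of_nonneg_right (D.le_opNorm _) (norm_nonneg _)
      _ ≤ ‖D‖ * (1 + ‖φ‖ * ‖u 1‖) := by
          rw [hnorm, mul_one]
          have h2 : ‖(v x : A) * u g⁻¹‖ ≤ ‖(v x : A)‖ * ‖u g⁻¹‖ := norm_mul_le _ _
          rw [hnorm, mul_one] at h2
          have := hvnorm x
          have h3 : (0:ℝ) ≤ ‖D‖ := D.opNorm_nonneg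
          nlinarith [le_trans h2 (hvnorm x)]
  -- solve the cocycle equation
  obtain ⟨Θ, hΘb, hΘ⟩ := solve_cocycle F K hFcoc hFb
  set lΘ : A →L[ℂ] ℂ := lpair e Θ K hΘb with hlΘ_def
  have hlΘu : ∀ g : G, lΘ (u g) = Θ g := lpair_uu e Θ K hΘb
  -- key evaluation : D (u g) (v x) = Θ (x*g) - Θ (g*x)
  have hvg0 : ∀ g : G, D (u g) (v g⁻¹) = 0 := by
    intro g
    have hA : (v g : A) * u g⁻¹ = -χ g • (v g⁻¹ : A) := by
      show (u g - χ g • u 1) * u g⁻¹ = -χ g • (u g⁻¹ - χ g⁻¹ • u 1)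
      rw [sub_mul, hmul, smul_mul_assoc, hue_l, mul_inv_cancel]
      rw [neg_smul, smul_sub, smul_smul, hχinv g, one_smul]
      abel
    have hFgg : F g g = -χ g * D (u g) (v g⁻¹) := by
      show D (u g) ⟨(v g : A) * u g⁻¹, hmemF g g⟩ = -χ g * D (u g) (v g⁻¹)
      rw [Dcongr (D (u g)) _ (-χ g • (v g⁻¹ : A)) (hmemF g g)
        (Submodule.smul_mem _ _ (v g⁻¹).2) hA]
      have : (⟨-χ g • (v g⁻¹ : A), Submodule.smul_mem _ _ (v g⁻¹).2⟩ : ↥I₀)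
          = -χ g • v g⁻¹ := rfl
      rw [this, map_smul, smul_eq_mul]
    have hz : F g g = 0 := by
      have := hΘ g g
      have hgg : g * g * g⁻¹ = g := by group
      rw [hgg, sub_self] at this
      exact this
    rw [hz] at hFgg
    have := hFgg.symm
    rcases mul_eq_zero.mp this with h | h
    · exact absurd (neg_eq_zero.mp h) (hχne g)
    · exact h
  have hkey : ∀ g x : G, D (u g) (v x) = Θ (x * g) - Θ (g * x) := by
    intro g x
    have hA : (v (x * g) : A) * u g⁻¹ = (v x : A) + (-χ (x * g)) • (v g⁻¹ : A) := by
      show (u (x * g) - χ (x * g) • u 1) * u g⁻¹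
          = (u x - χ x • u 1) + (-χ (x * g)) • (u g⁻¹ - χ g⁻¹ • u 1)
      rw [sub_mul, hmul, smul_mul_assoc, hue_l]
      have hxg : x * g * g⁻¹ = x := by group
      rw [hxg]
      have hc : χ x = χ (x * g) * χ g⁻¹ := by
        rw [← hχmul]
        congr 1
        group
      rw [neg_smul, smul_sub, smul_smul, ← hc]
      abel
    have hF1 : F g (x * g) = D (u g) (v x) + (-χ (x * g)) * D (u g) (v g⁻¹) := by
      show D (u g) ⟨(v (x * g) : A) * u g⁻¹, hmemF g (x * g)⟩ = _
      rw [Dcongr (D (u g)) _ ((v x : A) + (-χ (x * g)) • (v g⁻¹ : A)) (hmemF g (x * g))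
        (Submodule.add_mem _ (v x).2 (Submodule.smul_mem _ _ (v g⁻¹).2)) hA]
      have : (⟨(v x : A) + (-χ (x * g)) • (v g⁻¹ : A), _⟩ : ↥I₀)
          = v x + (-χ (x * g)) • v g⁻¹ := rfl
      rw [this, map_add, map_smul, smul_eq_mul]
    rw [hvg0 g, mul_zero, add_zero] at hF1
    have hθ : F g (x * g) = Θ (x * g) - Θ (g * x) := by
      have := hΘ g (x * g)
      have hgg : g * (x * g) * g⁻¹ = g * x := by group
      rw [hgg] at this
      exact this
    rw [← hF1, hθ]
  -- the functional ξ
  set ξ : StrongDual ℂ I₀ := lΘ.comp (Submodule.subtypeL I₀) with hξ_def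
  refine ⟨ξ, ?_⟩
  -- density of span of v in I₀
  have hPmem : ∀ a : A, a - φ a • u 1 ∈ I₀ := by
    intro a
    rw [hker, map_sub, map_smul, hφ1, smul_eq_mul, mul_one]
    exact sub_self _
  set P : A →L[ℂ] ↥I₀ :=
    (ContinuousLinearMap.id ℂ A - φ.smulRight (u 1)).codRestrict I₀ hPmem with hP_def
  have hPu : ∀ x : G, P (u x) = v x := by
    intro x
    apply Subtype.ext
    rfl
  have hPid : ∀ i : ↥I₀, P (i : A) = i := by
    intro i
    apply Subtype.ext
    show (i : A) - φ (i : A) • u 1 = (i : A)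
    have : φ (i : A) = 0 := (hker _).mp i.2
    rw [this, zero_smul, sub_zero]
  have hdense : Dense ((Submodule.span ℂ (Set.range v) : Submodule ℂ ↥I₀) : Set ↥I₀) := by
    rw [dense_iff_closure_eq, Set.eq_univ_iff_forall]
    intro j
    have h1 : (j : A) ∈ closure ((Submodule.span ℂ (Set.range u) : Submodule ℂ A) : Set A) :=
      dense_span_uu e _
    have h2 : P (j : A) ∈ closure (P '' ((Submodule.span ℂ (Set.range u)
        : Submodule ℂ A) : Set A)) :=
      map_mem_closure P.continuous h1 (Set.mapsTo_image _ _)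
    rw [hPid j] at h2
    refine closure_mono ?_ h2
    rintro _ ⟨w, hw, rfl⟩
    have h3 : P w ∈ Submodule.span ℂ (⇑P '' Set.range u) :=
      Submodule.apply_mem_span_image_of_mem_span (P : A →ₗ[ℂ] ↥I₀) hw
    refine Submodule.span_mono ?_ h3
    rintro _ ⟨_, ⟨x, rfl⟩, rfl⟩
    exact ⟨x, (hPu x).symm⟩
  -- for fixed g, identify D (u g) with the inner functional, by density in i
  have hstep2 : ∀ (g : G) (i : ↥I₀),
      D (u g) i = lΘ ((i : A) * u g) - lΘ (u g * (i : A)) := by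
    intro g
    set T : ↥I₀ →L[ℂ] ℂ :=
      lΘ.comp ((((ContinuousLinearMap.mul ℂ A).flip (u g))
        - (ContinuousLinearMap.mul ℂ A (u g))).comp (Submodule.subtypeL I₀)) with hT_def
    have hTval : ∀ i : ↥I₀, T i = lΘ ((i : A) * u g) - lΘ (u g * (i : A)) := by
      intro i
      show lΘ ((i : A) * u g - u g * (i : A)) = _
      rw [map_sub]
    have : D (u g) = T := by
      refine ContinuousLinearMap.ext_on hdense ?_
      rintro _ ⟨x, rfl⟩
      rw [hTval, hkey g x]
      have hcomm : (v x : A) * u g - u g * (v x : A) = u (x * g) - u (g * x) := by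
        show (u x - χ x • u 1) * u g - u g * (u x - χ x • u 1) = _
        rw [sub_mul, mul_sub, smul_mul_assoc, mul_smul_comm, hue_l, hue_r, hmul, hmul]
        abel
      rw [← map_sub, hcomm, map_sub, hlΘu, hlΘu]
    intro i
    rw [this, hTval]
  -- conclude by density in a
  intro a i
  set Φ₁ : A →L[ℂ] ℂ := (D.flip i) with hΦ₁_def
  set Φ₂ : A →L[ℂ] ℂ :=
    lΘ.comp ((ContinuousLinearMap.mul ℂ A (i : A))
      - (ContinuousLinearMap.mul ℂ A).flip (i : A)) with hΦ₂_def
  have hΦeq : Φ₁ = Φ₂ := by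
    apply clm_ext_uu e
    intro g
    have h1 : Φ₁ (u g) = D (u g) i := rfl
    have h2 : Φ₂ (u g) = lΘ ((i : A) * u g - u g * (i : A)) := rfl
    rw [h1, h2, map_sub, hstep2 g i]
  have h3 : D a i = Φ₁ a := rfl
  have h4 : Φ₂ a = lΘ ((i : A) * a - a * (i : A)) := rfl
  rw [h3, hΦeq, h4, map_sub]
  rfl
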